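/- Let $T$ be a $C_2$ tableau with $C(T)<D(T)$, $e_1T\ne0$, and $e_2T\ne0$. Then $e_1e_2T=e_2e_1T\ne0$ (a degree-2 commutation relation holds above $T$). -/

import Mathlib

/-! The `C₂` alphabet `1 < 2 < 2̄ < 1̄`, encoded as the integers `1, 2, -2, -1`. -/

/-- Position of a letter of the `C₂` alphabet: `1 ↦ 1`, `2 ↦ 2`, `2̄ ↦ 3`, `1̄ ↦ 4`. -/
def cpos (x : ℤ) : ℤ := if 0 < x then x else 5 + x

/-- A `C₂` tableau on a two-row Young diagram with row lengths `p ≥ q`: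
rows weakly increase, columns strictly increase, no column contains both `1` and `1̄`,
and no configuration with `2` in the top row of a column and `2̄` in the bottom row of
a weakly later column. -/
structure C2Tab (p q : ℕ) where
  hq : q ≤ p
  top : ℕ → ℤ
  bot : ℕ → ℤ
  htop : ∀ i < p, top i = 1 ∨ top i = 2 ∨ top i = -2 ∨ top i = -1
  hbot : ∀ i < q, bot i = 1 ∨ bot i = 2 ∨ bot i = -2 ∨ bot i = -1
  row_top : ∀ i j, i ≤ j → j < p → cpos (top i) ≤ cpos (top j)
  row_bot : ∀ i j, i ≤ j → j < q → cpos (bot i) ≤ cpos (bot j)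
  col_strict : ∀ i < q, cpos (top i) < cpos (bot i)
  no_one_barone : ∀ i < q, ¬ (top i = 1 ∧ bot i = -1)
  no_config : ∀ i j, i ≤ j → j < q → ¬ (top i = 2 ∧ bot j = -2)

/-- The column word of a `C₂` tableau: for each two-row column, bottom then top entry,
left to right, followed by the one-row entries left to right (length `p + q`). -/
def cword {p q : ℕ} (T : C2Tab p q) (m : ℕ) : ℤ :=
  if m < 2 * q then (if m % 2 = 0 then T.bot (m / 2) else T.top (m / 2)) else T.top (m - q)

/-- The `i`-signature of a letter (colors `i : Fin 2`, with `0` for color 1 and `1` for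
color 2): for color 1, `2, 1̄ ↦ +` and `1, 2̄ ↦ −`; for color 2, `2̄ ↦ +`, `2 ↦ −`,
`1, 1̄ ↦ ∗` (recorded as `0`). -/
def csig (i : Fin 2) (x : ℤ) : ℤ :=
  if i = 0 then (if x = 2 ∨ x = -1 then 1 else -1)
  else (if x = -2 then 1 else if x = 2 then -1 else 0)

def plusCount {p q : ℕ} (T : C2Tab p q) (i : Fin 2) (a b : ℕ) : ℕ :=
  ((Finset.Ico a b).filter (fun m => csig i (cword T m) = 1)).card

def minusCount {p q : ℕ} (T : C2Tab p q) (i : Fin 2) (a b : ℕ) : ℕ :=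
  ((Finset.Ico a b).filter (fun m => csig i (cword T m) = -1)).card

/-- Position `m` of the column word carries a `+` of the `i`-signature surviving the
reduction (removal of `+ ∗⋯∗ −` factors). -/
def unmatchedPlus {p q : ℕ} (T : C2Tab p q) (i : Fin 2) (m : ℕ) : Prop :=
  m < p + q ∧ csig i (cword T m) = 1 ∧
  ∀ j, m < j → j < p + q → minusCount T i (m + 1) (j + 1) ≤ plusCount T i (m + 1) (j + 1)

/-- The Kashiwara operator `e_i` acts at position `m`: the leftmost `+` of the reduced
`i`-signature. -/
def actsAt {p q : ℕ} (T : C2Tab p q) (i : Fin 2) (m : ℕ) : Prop :=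
  unmatchedPlus T i m ∧ ∀ m' < m, csig i (cword T m') = 1 → ¬ unmatchedPlus T i m'

/-- The raised value of a letter: `e_1` sends `2 ↦ 1`, `1̄ ↦ 2̄`; `e_2` sends `2̄ ↦ 2`. -/
def raiseLetter (i : Fin 2) (x : ℤ) : ℤ := if i = 0 then (if x = 2 then 1 else -2) else 2

/-- `e_i T = T'` (in particular `e_i T ≠ 0`). -/
def eRel {p q : ℕ} (i : Fin 2) (T T' : C2Tab p q) : Prop :=
  ∃ m, actsAt T i m ∧ cword T' m = raiseLetter i (cword T m) ∧
    ∀ m', m' < p + q → m' ≠ m → cword T' m' = cword T m'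

/-- `A(T)` = number of `2̄`'s in the top row. -/
def Astat {p q : ℕ} (T : C2Tab p q) : ℕ :=
  ((Finset.range p).filter (fun i => T.top i = -2)).card

/-- `B(T)` = number of `2`'s in the top row plus number of `1̄`'s in the bottom row. -/
def Bstat {p q : ℕ} (T : C2Tab p q) : ℕ :=
  ((Finset.range p).filter (fun i => T.top i = 2)).card +
  ((Finset.range q).filter (fun i => T.bot i = -1)).card

/-- `C(T)` = number of `2`'s in the top row. -/
def Cstat {p q : ℕ} (T : C2Tab p q) : ℕ :=
  ((Finset.range p).filter (fun i => T.top i = 2)).card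

/-- `D(T)` = number of `2̄`'s in the bottom row. -/
def Dstat {p q : ℕ} (T : C2Tab p q) : ℕ :=
  ((Finset.range q).filter (fun i => T.bot i = -2)).card

-- helpers
lemma csig0 (y : ℤ) : csig 0 y = if y = 2 ∨ y = -1 then 1 else -1 := by simp [csig]

lemma csig1 (y : ℤ) : csig 1 y = if y = -2 then 1 else if y = 2 then -1 else 0 := by
  simp [csig]

lemma csig0_pos {y : ℤ} : csig 0 y = 1 ↔ (y = 2 ∨ y = -1) := by
  rw [csig0]; split_ifs with h <;> simp_all

lemma csig1_pos {y : ℤ} : csig 1 y = 1 ↔ y = -2 := by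
  rw [csig1]; split_ifs with h1 h2 <;> simp_all

lemma csig1_neg {y : ℤ} : csig 1 y = -1 ↔ y = 2 := by
  rw [csig1]; split_ifs with h1 h2 <;> simp_all <;> omega

lemma cpos_one : cpos 1 = 1 := by norm_num [cpos]
lemma cpos_two : cpos 2 = 2 := by norm_num [cpos]
lemma cpos_btwo : cpos (-2) = 3 := by norm_num [cpos]
lemma cpos_bone : cpos (-1) = 4 := by norm_num [cpos]

lemma cword_bot {p q : ℕ} (T : C2Tab p q) {i : ℕ} (h : i < q) : cword T (2*i) = T.bot i := by
  have h1 : 2*i < 2*q := by omega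
  have e1 : (2*i) % 2 = 0 := by omega
  have e2 : (2*i) / 2 = i := by omega
  simp [cword, h1, e1, e2]

lemma cword_top {p q : ℕ} (T : C2Tab p q) {i : ℕ} (h : i < q) : cword T (2*i+1) = T.top i := by
  have h1 : 2*i+1 < 2*q := by omega
  have e1 : (2*i+1) % 2 ≠ 0 := by omega
  have e2 : (2*i+1) / 2 = i := by omega
  simp [cword, h1, e1, e2]

lemma cword_tail {p q : ℕ} (T : C2Tab p q) {i : ℕ} (hq : q ≤ i) (hp : i < p) :
    cword T (i + q) = T.top i := by
  have h1 : ¬ (i + q < 2 * q) := by omega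
  simp [cword, h1]

lemma cword_cases {p q : ℕ} (T : C2Tab p q) {m : ℕ} (hm : m < p + q) :
    (∃ i, i < q ∧ m = 2*i ∧ cword T m = T.bot i) ∨
    (∃ i, i < q ∧ m = 2*i+1 ∧ cword T m = T.top i) ∨
    (∃ i, q ≤ i ∧ i < p ∧ m = i + q ∧ cword T m = T.top i) := by
  by_cases h : m < 2*q
  · by_cases he : m % 2 = 0
    · exact Or.inl ⟨m/2, by omega, by omega, by simp [cword, h, he]⟩
    · exact Or.inr (Or.inl ⟨m/2, by omega, by omega, by simp [cword, h, he]⟩)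
  · exact Or.inr (Or.inr ⟨m - q, by omega, by omega, by simp [cword, h]; congr 1; omega⟩)

lemma actsAt_unique {p q : ℕ} {T : C2Tab p q} {i : Fin 2} {m n : ℕ}
    (h : actsAt T i m) (h' : actsAt T i n) : m = n := by
  rcases lt_trichotomy m n with hl | he | hl
  · exact absurd h.1 (h'.2 m hl h.1.2.1)
  · exact he
  · exact absurd h'.1 (h.2 n hl h'.1.2.1)

lemma minusCount_le {p q : ℕ} {T T' : C2Tab p q} {i : Fin 2} {a b : ℕ}
    (h : ∀ m, a ≤ m → m < b → csig i (cword T' m) = -1 → csig i (cword T m) = -1) :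
    minusCount T' i a b ≤ minusCount T i a b := by
  apply Finset.card_le_card
  intro m hm
  simp only [Finset.mem_filter, Finset.mem_Ico] at *
  exact ⟨hm.1, h m hm.1.1 hm.1.2 hm.2⟩

lemma plusCount_le {p q : ℕ} {T T' : C2Tab p q} {i : Fin 2} {a b : ℕ}
    (h : ∀ m, a ≤ m → m < b → csig i (cword T m) = 1 → csig i (cword T' m) = 1) :
    plusCount T i a b ≤ plusCount T' i a b := by
  apply Finset.card_le_card
  intro m hm
  simp only [Finset.mem_filter, Finset.mem_Ico] at *
  exact ⟨hm.1, h m hm.1.1 hm.1.2 hm.2⟩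

lemma counts_congr {p q : ℕ} {T T' : C2Tab p q} {i : Fin 2} {a b : ℕ}
    (h : ∀ m, a ≤ m → m < b → cword T' m = cword T m) :
    minusCount T' i a b = minusCount T i a b ∧ plusCount T' i a b = plusCount T' i a b ∧
      plusCount T' i a b = plusCount T i a b := by
  refine ⟨?_, rfl, ?_⟩ <;>
  · simp only [minusCount, plusCount]
    congr 1
    apply Finset.filter_congr
    intro m hm
    simp only [Finset.mem_Ico] at hm
    rw [h m hm.1 hm.2]

/-- If the next letter is a minus, position `m` is matched. -/
lemma not_unmatched_next {p q : ℕ} (U : C2Tab p q) (i : Fin 2) (m : ℕ)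
    (hm1 : m + 1 < p + q) (hnext : csig i (cword U (m+1)) = -1) :
    ¬ unmatchedPlus U i m := by
  intro h
  have hj := h.2.2 (m+1) (Nat.lt_succ_self m) hm1
  have hIco : Finset.Ico (m+1) (m+1+1) = {m+1} := by
    rw [Finset.Ico_add_one_right_eq_Icc, Finset.Icc_self]
  unfold minusCount plusCount at hj
  rw [hIco] at hj
  have h1 : ({m+1} : Finset ℕ).filter (fun m' => csig i (cword U m') = -1) = {m+1} := by
    rw [Finset.filter_singleton, if_pos hnext]
  have h2 : ({m+1} : Finset ℕ).filter (fun m' => csig i (cword U m') = 1) = ∅ := by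
    rw [Finset.filter_singleton, if_neg (by rw [hnext]; norm_num)]
  rw [h1, h2] at hj
  simp at hj

section Struct
variable {p q : ℕ} (T : C2Tab p q) {x : ℕ}
  (hx : x < q) (hbx : T.bot x = -2) (hmin : ∀ i < x, T.bot i ≠ -2)

include hx hbx in
lemma top_x_one : T.top x = 1 := by
  have hcs := T.col_strict x hx
  have hnc := T.no_config x x le_rfl hx
  rcases T.htop x (lt_of_lt_of_le hx T.hq) with h | h | h | h
  · exact h
  · exact absurd ⟨h, hbx⟩ hnc
  · rw [h, hbx] at hcs; norm_num [cpos] at hcs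
  · rw [h, hbx] at hcs; norm_num [cpos] at hcs

include hx hbx hmin in
lemma bot_before : ∀ i < x, T.bot i = 1 ∨ T.bot i = 2 := by
  intro i hi
  have hrb := T.row_bot i x (le_of_lt hi) hx
  rcases T.hbot i (lt_trans hi hx) with h | h | h | h
  · exact Or.inl h
  · exact Or.inr h
  · exact absurd h (hmin i hi)
  · rw [h, hbx] at hrb; norm_num [cpos] at hrb

include hx hbx in
lemma top2_after : ∀ i < q, T.top i = 2 → T.bot i = -1 ∧ x < i := by
  intro i hi hti
  have hcs := T.col_strict i hi
  have hnc := T.no_config i i le_rfl hi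
  have hbi : T.bot i = -1 := by
    rcases T.hbot i hi with h | h | h | h
    · rw [hti, h] at hcs; norm_num [cpos] at hcs
    · rw [hti, h] at hcs; norm_num [cpos] at hcs
    · exact absurd ⟨hti, h⟩ hnc
    · exact h
  refine ⟨hbi, ?_⟩
  by_contra hle
  have hrb := T.row_bot i x (by omega) hx
  rw [hbi, hbx] at hrb; norm_num [cpos] at hrb

include hx hbx hmin in
lemma no_m2_before : ∀ m < 2*x, cword T m ≠ -2 := by
  intro m hm
  by_cases he : m % 2 = 0
  · have hi : m/2 < x := by omega
    have : m = 2*(m/2) := by omega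
    rw [this, cword_bot T (by omega)]
    exact hmin _ hi
  · have hi : m/2 < x := by omega
    have : m = 2*(m/2) + 1 := by omega
    rw [this, cword_top T (by omega)]
    intro ht
    have hcs := T.col_strict (m/2) (by omega)
    rw [ht] at hcs
    rcases bot_before T hx hbx hmin (m/2) hi with h | h <;>
      rw [h] at hcs <;> norm_num [cpos] at hcs

include hx hbx hmin in
lemma plus0_before : ∀ m < 2*x, csig 0 (cword T m) = 1 →
    ∃ i, i < x ∧ m = 2*i ∧ T.bot i = 2 ∧ T.top i = 1 := by
  intro m hm hs
  rw [csig0_pos] at hs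
  by_cases he : m % 2 = 0
  · have hi : m/2 < x := by omega
    have hmm : m = 2*(m/2) := by omega
    rw [hmm, cword_bot T (by omega)] at hs
    have hb2 : T.bot (m/2) = 2 := by
      rcases bot_before T hx hbx hmin (m/2) hi with h | h
      · rw [h] at hs; norm_num at hs
      · exact h
    refine ⟨m/2, hi, hmm, hb2, ?_⟩
    have hcs := T.col_strict (m/2) (by omega)
    rw [hb2] at hcs
    rcases T.htop (m/2) (by have := T.hq; omega) with h | h | h | h
    · exact h
    all_goals (rw [h] at hcs; norm_num [cpos] at hcs)
  · have hi : m/2 < x := by omega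
    have hmm : m = 2*(m/2) + 1 := by omega
    rw [hmm, cword_top T (by omega)] at hs
    exfalso
    rcases hs with h | h
    · have := (top2_after T hx hbx (m/2) (by omega) h).2
      omega
    · have hcs := T.col_strict (m/2) (by omega)
      rw [h] at hcs
      rcases T.hbot (m/2) (by omega) with h' | h' | h' | h' <;>
        rw [h'] at hcs <;> norm_num [cpos] at hcs

end Struct

section E2
variable {p q : ℕ} (T : C2Tab p q) {x : ℕ}
  (hx : x < q) (hbx : T.bot x = -2) (hmin : ∀ i < x, T.bot i ≠ -2)

include hx hbx hmin in
lemma e2_actsAt (hCD : Cstat T < Dstat T) : actsAt T 1 (2*x) := by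
  have hq := T.hq
  constructor
  · refine ⟨by omega, ?_, ?_⟩
    · rw [cword_bot T hx, hbx, csig1_pos]
    · intro j hj hjq
      set M := (Finset.Ico (2*x+1) (j+1)).filter (fun m => csig 1 (cword T m) = -1) with hM
      set P := (Finset.Ico (2*x+1) (j+1)).filter (fun m => csig 1 (cword T m) = 1) with hP
      show M.card ≤ P.card
      rcases Finset.eq_empty_or_nonempty M with hE | ⟨m₀, hm₀⟩
      · rw [hE]; simp
      · have hMdesc : ∀ m ∈ M, (m % 2 = 1 ∧ m < 2*q ∧ T.top (m/2) = 2 ∧ x < m/2) ∨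
            (2*q ≤ m ∧ m < p + q ∧ T.top (m - q) = 2) := by
          intro m hm
          simp only [hM, Finset.mem_filter, Finset.mem_Ico] at hm
          obtain ⟨⟨hma, hmb⟩, hms⟩ := hm
          rw [csig1_neg] at hms
          have hmpq : m < p + q := by omega
          rcases cword_cases T hmpq with ⟨i, hi, he, hv⟩ | ⟨i, hi, he, hv⟩ |
            ⟨i, hi1, hi2, he, hv⟩
          · exfalso
            rw [hv] at hms
            have hrb := T.row_bot x i (by omega) hi
            rw [hbx, hms] at hrb; norm_num [cpos] at hrb
          · left
            rw [hv] at hms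
            have h2 : x < i := (top2_after T hx hbx i hi hms).2
            have hmi : m / 2 = i := by omega
            exact ⟨by omega, by omega, by rw [hmi]; exact hms, by omega⟩
          · right
            rw [hv] at hms
            have hmi : m - q = i := by omega
            exact ⟨by omega, hmpq, by rw [hmi]; exact hms⟩
        have hm₀' := hm₀
        simp only [hM, Finset.mem_filter, Finset.mem_Ico] at hm₀'
        have hm₀j : m₀ < j + 1 := hm₀'.1.2
        have hkey : ∀ i, x < i → i < q → T.bot i = -2 → 2*i < m₀ := by
          intro i hxi hiq hbi
          rcases hMdesc m₀ hm₀ with ⟨ho, hlt, ht2, hx2⟩ | ⟨hge, _, _⟩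
          · have hbm : T.bot (m₀/2) = -1 :=
              (top2_after T hx hbx (m₀/2) (by omega) ht2).1
            have hii : i < m₀/2 := by
              by_contra hh
              have hrb := T.row_bot (m₀/2) i (by omega) hiq
              rw [hbm, hbi] at hrb; norm_num [cpos] at hrb
            omega
          · omega
        have hMC : M.card ≤ Cstat T := by
          apply Finset.card_le_card_of_injOn (fun m => if m < 2*q then m/2 else m - q)
          · intro m hm
            simp only [Finset.mem_coe, Finset.mem_filter, Finset.mem_range]
            rcases hMdesc m hm with ⟨_, hlt, ht2, _⟩ | ⟨hge, hmpq, ht2⟩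
            · rw [if_pos hlt]; exact ⟨by omega, ht2⟩
            · rw [if_neg (by omega)]; exact ⟨by omega, ht2⟩
          · intro a ha b hb hab
            simp only at hab
            rcases hMdesc a ha with ⟨ho1, hl1, _, _⟩ | ⟨hg1, _, _⟩ <;>
              rcases hMdesc b hb with ⟨ho2, hl2, _, _⟩ | ⟨hg2, _, _⟩
            · rw [if_pos hl1, if_pos hl2] at hab; omega
            · rw [if_pos hl1, if_neg (by omega)] at hab; omega
            · rw [if_neg (by omega), if_pos hl2] at hab; omega
            · rw [if_neg (by omega), if_neg (by omega)] at hab; omega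
        have hDP : Dstat T - 1 ≤ P.card := by
          have hsub : (((Finset.range q).filter (fun i => T.bot i = -2)).erase x).card
              ≤ P.card := by
            apply Finset.card_le_card_of_injOn (fun i => 2*i)
            · intro i hi
              simp only [Finset.mem_coe, Finset.mem_erase, Finset.mem_filter, Finset.mem_range] at hi
              obtain ⟨hne, hiq, hbi⟩ := hi
              have hxi : x < i := by
                rcases lt_trichotomy i x with h | h | h
                · exact absurd hbi (hmin i h)
                · exact absurd h hne
                · exact h
              have h2i : 2*i < m₀ := hkey i hxi hiq hbi
              simp only [hP, Finset.mem_coe, Finset.mem_filter, Finset.mem_Ico]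
              exact ⟨⟨by omega, by omega⟩, by rw [cword_bot T hiq, hbi, csig1_pos]⟩
            · intro a _ b _ hab; simp only at hab; omega
          have hxmem : x ∈ (Finset.range q).filter (fun i => T.bot i = -2) := by
            simp only [Finset.mem_filter, Finset.mem_range]; exact ⟨hx, hbx⟩
          have hce := Finset.card_erase_of_mem hxmem
          simp only [Dstat]
          omega
        omega
  · intro m' hm' hs
    exact absurd (csig1_pos.mp hs) (no_m2_before T hx hbx hmin m' hm')

end E2

lemma raise0_two : raiseLetter 0 2 = 1 := by norm_num [raiseLetter]
lemma raise0_bone : raiseLetter 0 (-1) = -2 := by norm_num [raiseLetter]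
lemma raise1 (y : ℤ) : raiseLetter 1 y = 2 := by norm_num [raiseLetter]

section M1
variable {p q : ℕ} {T V : C2Tab p q} {x m1 : ℕ}
  (hx : x < q) (hbx : T.bot x = -2) (hmin : ∀ i < x, T.bot i ≠ -2)
  (hact1 : actsAt T 0 m1)
  (hV1 : cword V m1 = raiseLetter 0 (cword T m1))
  (hV2 : ∀ m', m' < p + q → m' ≠ m1 → cword V m' = cword T m')

include hx hbx hact1 hV1 hV2 in
lemma m1_gt : 2*x < m1 := by
  have hq := T.hq
  have hm1pq : m1 < p + q := hact1.1.1
  have hlet : cword T m1 = 2 ∨ cword T m1 = -1 := csig0_pos.mp hact1.1.2.1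
  rcases cword_cases T hm1pq with ⟨i, hi, he, hv⟩ | ⟨i, hi, he, hv⟩ | ⟨i, hi1, hi2, he, hv⟩
  · -- m1 a bottom entry: contradiction with validity of V
    exfalso
    have hVti : V.top i = T.top i := by
      have h1 : cword V (2*i+1) = cword T (2*i+1) := hV2 _ (by omega) (by omega)
      rw [cword_top V hi, cword_top T hi] at h1; exact h1
    have hVbi : V.bot i = raiseLetter 0 (T.bot i) := by
      have h1 : cword V (2*i) = raiseLetter 0 (cword T (2*i)) := by
        rw [← he]; exact hV1
      rw [cword_bot V hi, cword_bot T hi] at h1; exact h1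
    rw [hv] at hlet
    rcases hlet with h | h
    · rw [h, raise0_two] at hVbi
      have hcs := V.col_strict i hi
      rw [hVbi, cpos_one] at hcs
      rcases V.htop i (by omega) with h' | h' | h' | h' <;>
        rw [h'] at hcs <;> norm_num [cpos] at hcs
    · rw [h, raise0_bone] at hVbi
      have hne1 : T.top i ≠ 1 := fun h1 => T.no_one_barone i hi ⟨h1, h⟩
      have hcs := T.col_strict i hi
      rw [h, cpos_bone] at hcs
      rcases T.htop i (by omega) with h' | h' | h' | h'
      · exact hne1 h'
      · exact V.no_config i i le_rfl hi ⟨by rw [hVti]; exact h', hVbi⟩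
      · have hcs' := V.col_strict i hi
        rw [hVbi, hVti, h', cpos_btwo] at hcs'; norm_num at hcs'
      · rw [h', cpos_bone] at hcs; norm_num at hcs
  · rw [hv] at hlet
    rcases hlet with h | h
    · have := (top2_after T hx hbx i hi h).2; omega
    · exfalso
      have hcs := T.col_strict i hi
      rw [h, cpos_bone] at hcs
      rcases T.hbot i hi with h' | h' | h' | h' <;>
        rw [h'] at hcs <;> norm_num [cpos] at hcs
  · omega

include hx hbx hact1 hV1 hV2 in
lemma m1_ne_topx : m1 ≠ 2*x + 1 := by
  intro he
  have hlet : cword T m1 = 2 ∨ cword T m1 = -1 := csig0_pos.mp hact1.1.2.1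
  rw [he, cword_top T hx, top_x_one T hx hbx] at hlet
  rcases hlet with h | h <;> norm_num at h

end M1

section Commute
variable {p q : ℕ} {T V U : C2Tab p q} {x m1 : ℕ}
  (hx : x < q) (hbx : T.bot x = -2) (hmin : ∀ i < x, T.bot i ≠ -2)
  (hCD : Cstat T < Dstat T)
  (hact1 : actsAt T 0 m1)
  (hV1 : cword V m1 = raiseLetter 0 (cword T m1))
  (hV2 : ∀ m', m' < p + q → m' ≠ m1 → cword V m' = cword T m')
  (hU1 : cword U (2*x) = 2)
  (hU2 : ∀ m', m' < p + q → m' ≠ 2*x → cword U m' = cword T m')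

include hx hbx hmin hCD hact1 hV1 hV2 in
lemma actsAt_V : actsAt V 1 (2*x) := by
  have hq := T.hq
  have hgt : 2*x < m1 := m1_gt hx hbx hact1 hV1 hV2
  have hm1pq : m1 < p + q := hact1.1.1
  have hlet : cword T m1 = 2 ∨ cword T m1 = -1 := csig0_pos.mp hact1.1.2.1
  have hsame : cword V (2*x) = cword T (2*x) := hV2 _ (by omega) (by omega)
  have hTacts := e2_actsAt T hx hbx hmin hCD
  constructor
  · refine ⟨by omega, ?_, ?_⟩
    · rw [hsame, cword_bot T hx, hbx, csig1_pos]
    · intro j hj hjq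
      have h1 : minusCount V 1 (2*x+1) (j+1) ≤ minusCount T 1 (2*x+1) (j+1) := by
        apply minusCount_le
        intro m hma hmb hs
        by_cases hmm : m = m1
        · exfalso
          rw [hmm, hV1] at hs
          rcases hlet with h | h <;> rw [h] at hs
          · rw [raise0_two, csig1_neg] at hs; norm_num at hs
          · rw [raise0_bone, csig1_neg] at hs; norm_num at hs
        · rw [hV2 m (by omega) hmm] at hs; exact hs
      have h2 : plusCount T 1 (2*x+1) (j+1) ≤ plusCount V 1 (2*x+1) (j+1) := by
        apply plusCount_le
        intro m hma hmb hs
        by_cases hmm : m = m1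
        · exfalso
          rw [hmm] at hs
          rcases hlet with h | h <;> rw [h, csig1_pos] at hs <;> norm_num at hs
        · rw [hV2 m (by omega) hmm]; exact hs
      have h3 := hTacts.1.2.2 j hj hjq
      omega
  · intro m' hm' hs
    exfalso
    rw [csig1_pos] at hs
    rw [hV2 m' (by omega) (by omega)] at hs
    exact no_m2_before T hx hbx hmin m' hm' hs

include hx hbx hmin hact1 hV1 hV2 hU1 hU2 in
lemma actsAt_U : actsAt U 0 m1 := by
  have hq := T.hq
  have hgt : 2*x < m1 := m1_gt hx hbx hact1 hV1 hV2
  have hm1pq : m1 < p + q := hact1.1.1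
  have hUm1 : cword U m1 = cword T m1 := hU2 _ hm1pq (by omega)
  constructor
  · refine ⟨hm1pq, by rw [hUm1]; exact hact1.1.2.1, ?_⟩
    · intro j hj hjq
      have hcc := counts_congr (T := T) (T' := U) (i := 0) (a := m1+1) (b := j+1)
        (fun m hma hmb => hU2 m (by omega) (by omega))
      rw [hcc.1, hcc.2.2]
      exact hact1.1.2.2 j hj hjq
  · intro m' hm' hs
    rcases lt_trichotomy m' (2*x) with hc | hc | hc
    · -- a bottom 2 before column x; matched by the 1 on top of it
      have hs' : csig 0 (cword T m') = 1 := by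
        rw [← hU2 m' (by omega) (by omega)]; exact hs
      obtain ⟨i, hi, he, hb2, ht1⟩ := plus0_before T hx hbx hmin m' hc hs'
      apply not_unmatched_next U 0 m' (by omega)
      have : cword U (m'+1) = cword T (m'+1) := hU2 _ (by omega) (by omega)
      rw [this, he, cword_top T (by omega), ht1, csig0]
      norm_num
    · -- the new 2 at position 2x; matched by the 1 on top of it
      subst hc
      apply not_unmatched_next U 0 (2*x) (by omega)
      have h1 : cword U (2*x+1) = cword T (2*x+1) := hU2 _ (by omega) (by omega)
      rw [h1, cword_top T hx, top_x_one T hx hbx, csig0]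
      norm_num
    · -- beyond 2x: same as in T
      have hs' : csig 0 (cword T m') = 1 := by
        rw [← hU2 m' (by omega) (by omega)]; exact hs
      have hnT := hact1.2 m' hm' hs'
      intro hUun
      apply hnT
      refine ⟨by omega, hs', ?_⟩
      intro j hj hjq
      have hcc := counts_congr (T := T) (T' := U) (i := 0) (a := m'+1) (b := j+1)
        (fun m hma hmb => hU2 m (by omega) (by omega))
      rw [← hcc.1, ← hcc.2.2]
      exact hUun.2.2 j hj hjq

end Commute

lemma build_W {p q : ℕ} (V : C2Tab p q) (x : ℕ) (hx : x < q)
    (hVtx : V.top x = 1) (hVbx : V.bot x = -2)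
    (hVbef : ∀ i < x, V.bot i = 1 ∨ V.bot i = 2) :
    ∃ W : C2Tab p q, W.top = V.top ∧ W.bot = Function.update V.bot x 2 := by
  refine ⟨⟨V.hq, V.top, Function.update V.bot x 2, V.htop, ?_, V.row_top, ?_, ?_, ?_, ?_⟩,
    rfl, rfl⟩
  · intro i hi
    by_cases h : i = x
    · subst h; rw [Function.update_self]; norm_num
    · rw [Function.update_of_ne h]; exact V.hbot i hi
  · -- row_bot
    intro i j hij hj
    by_cases hjx : j = x
    · by_cases hix : i = x
      · rw [hix, hjx]
      · rw [Function.update_of_ne hix, hjx, Function.update_self]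
        rcases hVbef i (by omega) with h | h <;> rw [h] <;> norm_num [cpos]
    · by_cases hix : i = x
      · rw [hix, Function.update_self, Function.update_of_ne hjx]
        have h1 := V.row_bot x j (by omega) hj
        rw [hVbx, cpos_btwo] at h1
        rw [cpos_two]
        linarith
      · rw [Function.update_of_ne hix, Function.update_of_ne hjx]
        exact V.row_bot i j hij hj
  · -- col_strict
    intro i hi
    by_cases h : i = x
    · subst h
      rw [Function.update_self, hVtx, cpos_one, cpos_two]
      norm_num
    · rw [Function.update_of_ne h]; exact V.col_strict i hi
  · -- no_one_barone
    intro i hi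
    by_cases h : i = x
    · subst h; rw [Function.update_self]; rintro ⟨-, h2⟩; norm_num at h2
    · rw [Function.update_of_ne h]; exact V.no_one_barone i hi
  · -- no_config
    intro i j hij hj
    by_cases h : j = x
    · subst h; rw [Function.update_self]; rintro ⟨-, h2⟩; norm_num at h2
    · rw [Function.update_of_ne h]; exact V.no_config i j hij hj

lemma cword_W {p q : ℕ} {W V : C2Tab p q} {x : ℕ} (ht : W.top = V.top)
    (hb : W.bot = Function.update V.bot x 2) :
    (∀ m, m ≠ 2*x → cword W m = cword V m) ∧ (x < q → cword W (2*x) = 2) := by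
  constructor
  · intro m hm
    unfold cword
    split_ifs with h1 h2
    · rw [hb, Function.update_of_ne (by omega)]
    · rw [ht]
    · rw [ht]
  · intro hxq
    rw [cword_bot W hxq, hb, Function.update_self]

/-- If `T` is a `C₂` tableau with `C(T) < D(T)`, `e₁T ≠ 0` and
`e₂T ≠ 0`, then `e₁e₂T = e₂e₁T ≠ 0`: a degree-2 commutation relation holds above `T`. -/
theorem degree_two_relation_CltD (p q : ℕ) (T : C2Tab p q)
    (hCD : Cstat T < Dstat T)
    (h1 : ∃ U, eRel 0 T U) (h2 : ∃ U, eRel 1 T U) :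
    ∃ (U V W W' : C2Tab p q),
      eRel 1 T U ∧ eRel 0 U W ∧ eRel 0 T V ∧ eRel 1 V W' ∧
      ∀ m < p + q, cword W m = cword W' m := by
  classical
  obtain ⟨V, m1, hact1, hV1, hV2⟩ := h1
  obtain ⟨U, m2, hact2, hU1, hU2⟩ := h2
  have hq := T.hq
  have hex : ∃ i, i < q ∧ T.bot i = -2 := by
    have hpos : 0 < Dstat T := by omega
    rw [Dstat, Finset.card_pos] at hpos
    obtain ⟨i, hi⟩ := hpos
    simp only [Finset.mem_filter, Finset.mem_range] at hi
    exact ⟨i, hi.1, hi.2⟩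
  set x := Nat.find hex with hxdef
  have hspec := Nat.find_spec hex
  obtain ⟨hx, hbx⟩ := hspec
  have hmin : ∀ i < x, T.bot i ≠ -2 := fun i hi hbi =>
    Nat.find_min hex hi ⟨by omega, hbi⟩
  have hactx := e2_actsAt T hx hbx hmin hCD
  have hm2x : m2 = 2*x := actsAt_unique hact2 hactx
  rw [hm2x] at hU1 hU2
  have hU1' : cword U (2*x) = 2 := by rw [hU1, raise1]
  have hgt : 2*x < m1 := m1_gt hx hbx hact1 hV1 hV2
  have hm1pq : m1 < p + q := hact1.1.1
  have hnotx1 : m1 ≠ 2*x + 1 := m1_ne_topx hx hbx hact1 hV1 hV2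
  have hVbx : V.bot x = -2 := by
    have h := hV2 (2*x) (by omega) (by omega)
    rw [cword_bot V hx, cword_bot T hx, hbx] at h; exact h
  have hVtx : V.top x = 1 := by
    have h := hV2 (2*x+1) (by omega) (Ne.symm hnotx1)
    rw [cword_top V hx, cword_top T hx, top_x_one T hx hbx] at h; exact h
  have hVbef : ∀ i < x, V.bot i = 1 ∨ V.bot i = 2 := by
    intro i hi
    have h := hV2 (2*i) (by omega) (by omega)
    rw [cword_bot V (by omega), cword_bot T (by omega)] at h
    rw [h]; exact bot_before T hx hbx hmin i hi
  obtain ⟨W, hWt, hWb⟩ := build_W V x hx hVtx hVbx hVbef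
  obtain ⟨hW1, hW2⟩ := cword_W hWt hWb
  have hW2x : cword W (2*x) = 2 := hW2 hx
  refine ⟨U, V, W, W, ⟨2*x, hactx, hU1, hU2⟩, ?_, ⟨m1, hact1, hV1, hV2⟩, ?_,
    fun m _ => rfl⟩
  · refine ⟨m1, actsAt_U hx hbx hmin hact1 hV1 hV2 hU1' hU2, ?_, ?_⟩
    · rw [hW1 m1 (by omega), hV1, hU2 m1 hm1pq (by omega)]
    · intro m' hm' hne
      by_cases hmx : m' = 2*x
      · rw [hmx, hW2x, hU1']
      · rw [hW1 m' hmx, hV2 m' hm' hne, hU2 m' hm' hmx]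
  · refine ⟨2*x, actsAt_V hx hbx hmin hCD hact1 hV1 hV2, ?_, ?_⟩
    · rw [hW2x, raise1]
    · intro m' hm' hne
      exact hW1 m' hne
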